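/- Let n ≥ 2. The set of upper-triangular n×n complex matrices g satisfying gᵀ·g = 1 and det(g) = 1 is finite and is not a connected subset of the space of n×n complex matrices. (Consequently, the subgroup SO(n) ⊂ SL(n) is not parabolically connected.) -/

import Mathlib

open Matrix

private lemma so_offdiag {n : ℕ} {g : Matrix (Fin n) (Fin n) ℂ}
    (h1 : g.BlockTriangular id) (h2 : gᵀ * g = 1) :
    ∀ i j : Fin n, i ≠ j → g i j = 0 := by
  have hinv : Invertible g := invertibleOfLeftInverse g gᵀ h2
  have hne : g⁻¹ = gᵀ := Matrix.inv_eq_left_inv h2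
  have h3 : gᵀ.BlockTriangular id := hne ▸ blockTriangular_inv_of_blockTriangular h1
  intro i j hij
  rcases lt_or_gt_of_ne hij with h | h
  · have := h3 (show id i < id j from h)
    simpa using this
  · exact h1 (show id j < id i from h)

private lemma so_diag {n : ℕ} {g : Matrix (Fin n) (Fin n) ℂ}
    (h1 : g.BlockTriangular id) (h2 : gᵀ * g = 1) (i : Fin n) :
    g i i = 1 ∨ g i i = -1 := by
  have h := congrArg (fun M => M i i) h2
  simp only [Matrix.mul_apply, Matrix.transpose_apply, Matrix.one_apply_eq] at h
  rw [Finset.sum_eq_single i (fun k _ hk => by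
    rw [so_offdiag h1 h2 k i hk]; ring) (by simp)] at h
  exact mul_self_eq_one_iff.mp h

theorem so_not_parabolically_connected (n : ℕ) (hn : 2 ≤ n) :
    ({g : Matrix (Fin n) (Fin n) ℂ |
        g.BlockTriangular id ∧ gᵀ * g = 1 ∧ g.det = 1}).Finite ∧
    ¬ IsConnected {g : Matrix (Fin n) (Fin n) ℂ |
        g.BlockTriangular id ∧ gᵀ * g = 1 ∧ g.det = 1} := by
  set S := {g : Matrix (Fin n) (Fin n) ℂ |
        g.BlockTriangular id ∧ gᵀ * g = 1 ∧ g.det = 1} with hS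
  constructor
  · -- finiteness
    have hTfin : (Set.pi Set.univ (fun _ : Fin n => ({1, -1} : Set ℂ))).Finite :=
      Set.Finite.pi (fun _ => (Set.finite_singleton _).insert _)
    refine (hTfin.image Matrix.diagonal).subset ?_
    rintro g ⟨h1, h2, h3⟩
    refine ⟨fun i => g i i, fun i _ => ?_, ?_⟩
    · rcases so_diag h1 h2 i with h | h <;> simp [h]
    · ext i j
      by_cases h : i = j
      · subst h; simp
      · rw [Matrix.diagonal_apply_ne _ h, so_offdiag h1 h2 i j h]
  · -- disconnectedness
    have h01 : (0 : ℕ) < n := by omega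
    have h11 : (1 : ℕ) < n := by omega
    set i0 : Fin n := ⟨0, h01⟩
    set i1 : Fin n := ⟨1, h11⟩
    have hne01 : i0 ≠ i1 := by simp [i0, i1, Fin.ext_iff]
    set f : Fin n → ℂ := fun k => if k ∈ ({i0, i1} : Finset (Fin n)) then -1 else 1 with hf
    have hd : Matrix.diagonal f ∈ S := by
      refine ⟨Matrix.blockTriangular_diagonal f, ?_, ?_⟩
      · have hff : (fun i => f i * f i) = fun _ => (1 : ℂ) := by
          funext k
          by_cases h : k ∈ ({i0, i1} : Finset (Fin n)) <;>
            · simp only [hf]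
              first
                | (rw [if_pos h]; norm_num)
                | (rw [if_neg h]; norm_num)
        rw [Matrix.diagonal_transpose, Matrix.diagonal_mul_diagonal, hff]
        exact Matrix.diagonal_one
      · rw [Matrix.det_diagonal, ← Finset.prod_mul_prod_compl ({i0, i1} : Finset (Fin n))]
        have e1 : ∏ k ∈ ({i0, i1} : Finset (Fin n)), f k = 1 := by
          rw [Finset.prod_congr rfl (fun k hk => show f k = -1 by simp only [hf]; rw [if_pos hk]),
            Finset.prod_const, Finset.card_insert_of_notMem (by simp [hne01]),
            Finset.card_singleton]
          norm_num
        have e2 : ∏ k ∈ ({i0, i1} : Finset (Fin n))ᶜ, f k = 1 :=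
          Finset.prod_eq_one (fun k hk => by
            simp only [Finset.mem_compl] at hk
            simp only [hf]; rw [if_neg hk])
        rw [e1, e2, mul_one]
    have h1S : (1 : Matrix (Fin n) (Fin n) ℂ) ∈ S :=
      ⟨Matrix.blockTriangular_one, by simp, by simp⟩
    rintro ⟨-, hconn⟩
    have hcont : Continuous fun g : Matrix (Fin n) (Fin n) ℂ => (g i0 i0).re :=
      (Complex.continuous_re.comp ((continuous_apply i0).comp (continuous_apply i0)))
    have hU : IsOpen {g : Matrix (Fin n) (Fin n) ℂ | 0 < (g i0 i0).re} :=
      isOpen_lt continuous_const hcont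
    have hV : IsOpen {g : Matrix (Fin n) (Fin n) ℂ | (g i0 i0).re < 0} :=
      isOpen_lt hcont continuous_const
    have hcover : S ⊆ {g | 0 < (g i0 i0).re} ∪ {g | (g i0 i0).re < 0} := by
      rintro g ⟨h1, h2, -⟩
      rcases so_diag h1 h2 i0 with h | h
      · left; simp [h]
      · right; simp [h]
    obtain ⟨x, -, hx1, hx2⟩ := hconn _ _ hU hV hcover
      ⟨1, h1S, by simp⟩
      ⟨Matrix.diagonal f, hd, by simp [hf, Matrix.diagonal_apply_eq]⟩
    simp only [Set.mem_setOf_eq] at hx1 hx2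
    exact absurd (hx1.trans hx2) (lt_irrefl _)
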